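/- A run of the automaton A_G on a tree t is accepting if and only if the (unique) branch labelled with g-states is a good branch of t such that no good branch lies strictly to its left; consequently t is accepted iff t ∈ G, and the accepting run, when it exists, is unique. -/

import Mathlib

/-- Infinite binary trees over {a,b}; `true` = a, `false` = b. -/
abbrev Tree2 := List (Fin 2) → Bool

/-- The length-`n` prefix of a branch. -/
def pre (β : ℕ → Fin 2) (n : ℕ) : List (Fin 2) := List.ofFn (fun i : Fin n => β i)

/-- A branch is good: all its finite prefixes are labelled `a` and it turns left (0)
infinitely often. -/
def Good (t : Tree2) (β : ℕ → Fin 2) : Prop :=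
  (∀ n, t (pre β n) = true) ∧ (∀ m, ∃ n ≥ m, β n = 0)

/-- `β` is strictly to the left of `γ`. -/
def LeftOf (β γ : ℕ → Fin 2) : Prop :=
  ∃ n, (∀ i < n, β i = γ i) ∧ β n = 0 ∧ γ n = 1

/-- A branch passes through a node. -/
def Through (γ : ℕ → Fin 2) (v : List (Fin 2)) : Prop := pre γ v.length = v

/-- The set of trees that have a good branch. -/
def G : Set Tree2 := {t | ∃ β, Good t β}

/-- `r` occurs infinitely often in the sequence `g`. -/
def InfOften (g : ℕ → ℕ) (r : ℕ) : Prop := ∀ m, ∃ n ≥ m, g n = r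

/-- Parity condition: the maximal value occurring infinitely often is even. -/
def ParityOk (g : ℕ → ℕ) : Prop :=
  ∃ r, Even r ∧ InfOften g r ∧ ∀ r', InfOften g r' → r' ≤ r

/-- States of the unambiguous automaton `A_G`. -/
inductive QG | g1 | g2 | top2 | bot1 | l1 | l0 | top0
deriving DecidableEq

def rankG : QG → ℕ
  | .g1 => 1 | .g2 => 2 | .top2 => 2 | .bot1 => 1
  | .l1 => 1 | .l0 => 0 | .top0 => 0

/-- Transition relation of `A_G` (`true` = a, `false` = b). -/
def deltaG : QG → Bool → QG → QG → Prop := fun q a q1 q2 =>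
  match q, a with
  | .g1, true | .g2, true => (q1 = .g2 ∧ q2 = .top2) ∨ (q1 = .l1 ∧ q2 = .g1)
  | .g1, false | .g2, false => q1 = .bot1 ∧ q2 = .bot1
  | .l1, true | .l0, true => q1 = .l1 ∧ q2 = .l0
  | .l1, false | .l0, false => q1 = .top0 ∧ q2 = .top0
  | .top2, _ => q1 = .top2 ∧ q2 = .top2
  | .bot1, _ => q1 = .bot1 ∧ q2 = .bot1
  | .top0, _ => q1 = .top0 ∧ q2 = .top0

/-- A run of `A_G` on `t` starting in state `q0`. -/
def IsRunG (t : Tree2) (q0 : QG) (ρ : List (Fin 2) → QG) : Prop :=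
  ρ [] = q0 ∧ ∀ v : List (Fin 2), deltaG (ρ v) (t v) (ρ (v ++ [0])) (ρ (v ++ [1]))

/-- An accepting run: the parity condition holds on every branch. -/
def AccRunG (t : Tree2) (q0 : QG) (ρ : List (Fin 2) → QG) : Prop :=
  IsRunG t q0 ρ ∧ ∀ β : ℕ → Fin 2, ParityOk (fun n => rankG (ρ (pre β n)))

section AGaux
variable {t : Tree2} {β γ : ℕ → Fin 2}

lemma pre_zero (β : ℕ → Fin 2) : pre β 0 = [] := rfl

lemma pre_succ (β : ℕ → Fin 2) (n : ℕ) : pre β (n+1) = pre β n ++ [β n] := by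
  rw [pre, List.ofFn_succ']
  simp [Fin.last, pre]

lemma pre_length (β : ℕ → Fin 2) (n : ℕ) : (pre β n).length = n := by simp [pre]

lemma pre_congr {n : ℕ} (h : ∀ i < n, β i = γ i) : pre β n = pre γ n := by
  simp only [pre]
  congr 1
  funext i
  exact h i i.isLt

lemma fin2_cases (i : Fin 2) : i = 0 ∨ i = 1 := by omega

lemma fin2_ne (i : Fin 2) (h : ¬ i = 0) : i = 1 := by omega

def child0 (a : Bool) (b0 : Fin 2) (q : QG) (i : Fin 2) : QG :=
  match q, a with
  | .g1, true | .g2, true =>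
      if b0 = 0 then (if i = 0 then .g2 else .top2) else (if i = 0 then .l1 else .g1)
  | .g1, false | .g2, false => .bot1
  | .l1, true | .l0, true => if i = 0 then .l1 else .l0
  | .l1, false | .l0, false => .top0
  | .top2, _ => .top2
  | .bot1, _ => .bot1
  | .top0, _ => .top0

def canon (t : Tree2) (β : ℕ → Fin 2) (v : List (Fin 2)) : QG :=
  (v.foldl (fun p i => (p.1 ++ [i], child0 (t p.1) (β p.1.length) p.2 i))
    (([] : List (Fin 2)), QG.g1)).2

lemma canon_nil : canon t β [] = QG.g1 := rfl

lemma canon_foldl_fst (v : List (Fin 2)) (p : List (Fin 2)) (q : QG) :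
    (v.foldl (fun p i => (p.1 ++ [i], child0 (t p.1) (β p.1.length) p.2 i)) (p, q)).1
      = p ++ v := by
  induction v generalizing p q with
  | nil => simp
  | cons a v ih => simp [List.foldl_cons, ih]

lemma canon_snoc (v : List (Fin 2)) (i : Fin 2) :
    canon t β (v ++ [i]) = child0 (t v) (β v.length) (canon t β v) i := by
  simp only [canon, List.foldl_append, List.foldl_cons, List.foldl_nil]
  rw [canon_foldl_fst]
  simp

lemma canon_run (t : Tree2) (β : ℕ → Fin 2) : IsRunG t QG.g1 (canon t β) := by
  refine ⟨rfl, fun v => ?_⟩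
  rw [canon_snoc, canon_snoc]
  rcases fin2_cases (β v.length) with h | h <;>
    cases hq : canon t β v <;> cases ht : t v <;> simp [child0, deltaG, h]

end AGaux
section AGaux2
variable {t : Tree2} {β γ : ℕ → Fin 2} {ρ : List (Fin 2) → QG} {g : ℕ → ℕ}

lemma pre_add (β : ℕ → Fin 2) (a b : ℕ) :
    pre β (a + b) = pre β a ++ pre (fun i => β (a + i)) b := by
  induction b with
  | zero => simp [pre_zero]
  | succ b ih => rw [← Nat.add_assoc, pre_succ, pre_succ, ih, List.append_assoc]

lemma infoften_const {m c r : ℕ} (h : ∀ k ≥ m, g k = c) (hr : InfOften g r) : r = c := by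
  obtain ⟨n, hn, hg⟩ := hr m
  rw [← hg, h n hn]

lemma parity_of_eventually {m c : ℕ} (h : ∀ k ≥ m, g k = c) (hc : Even c) : ParityOk g := by
  refine ⟨c, hc, fun k => ⟨max k m, le_max_left _ _, h _ (le_max_right _ _)⟩,
    fun r hr => le_of_eq (infoften_const h hr)⟩

lemma not_parity_of_eventually_one {m : ℕ} (h : ∀ k ≥ m, g k = 1) : ¬ ParityOk g := by
  rintro ⟨r, he, hi, -⟩
  rw [infoften_const h hi] at he
  exact (Nat.not_even_iff.2 rfl) he

lemma parity_of_two (hb : ∀ k, g k ≤ 2) (h2 : InfOften g 2) : ParityOk g := by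
  refine ⟨2, by decide, h2, fun r hr => ?_⟩
  obtain ⟨n, -, hg⟩ := hr 0
  exact hg ▸ hb n

lemma not_parity_of_one_cap {m : ℕ} (h1 : InfOften g 1) (hb : ∀ k ≥ m, g k ≤ 1) :
    ¬ ParityOk g := by
  rintro ⟨r, he, hi, hmax⟩
  have h1r := hmax 1 h1
  obtain ⟨n, hn, hg⟩ := hi m
  have h2 : r ≤ 1 := hg ▸ hb n hn
  have h3 : r = 1 := le_antisymm h2 h1r
  subst h3
  exact (Nat.not_even_iff.2 rfl) he

/-- states along β in the canonical run are g-states -/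
lemma canon_g (ha : ∀ n, t (pre β n) = true) (n : ℕ) :
    canon t β (pre β n) = QG.g1 ∨ canon t β (pre β n) = QG.g2 := by
  induction n with
  | zero => left; rfl
  | succ n ih =>
      rw [pre_succ, canon_snoc, pre_length, ha n]
      rcases fin2_cases (β n) with h | h <;> rcases ih with ih | ih <;>
        simp [child0, ih, h]

/-- the canonical run is the only run that is g along β -/
lemma run_eq_canon (hr : IsRunG t QG.g1 ρ)
    (hg : ∀ n, ρ (pre β n) = QG.g1 ∨ ρ (pre β n) = QG.g2)
    (ha : ∀ n, t (pre β n) = true) : ρ = canon t β := by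
  have key : ∀ v, ρ v = canon t β v ∧
      ((ρ v = QG.g1 ∨ ρ v = QG.g2) → v = pre β v.length) := by
    intro v
    induction v using List.reverseRecOn with
    | nil => exact ⟨hr.1, fun _ => rfl⟩
    | append_singleton u i ih =>
        obtain ⟨ihe, ihg⟩ := ih
        have hd := hr.2 u
        by_cases hgu : ρ u = QG.g1 ∨ ρ u = QG.g2
        · -- u is on β
          have hu : u = pre β u.length := ihg hgu
          have htu : t u = true := by rw [hu]; exact ha u.length
          have hlen : (pre β u.length).length = u.length := pre_length β u.length
          have hnext : ρ (pre β (u.length + 1)) = QG.g1 ∨ ρ (pre β (u.length + 1)) = QG.g2 :=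
            hg (u.length + 1)
          rw [pre_succ, ← hu] at hnext
          have hdel : (ρ (u ++ [0]) = QG.g2 ∧ ρ (u ++ [1]) = QG.top2) ∨
              (ρ (u ++ [0]) = QG.l1 ∧ ρ (u ++ [1]) = QG.g1) := by
            rcases hgu with h | h <;> rw [h] at hd <;> rw [htu] at hd <;> exact hd
          have hc : canon t β (u ++ [i]) = child0 (t u) (β u.length) (canon t β u) i :=
            canon_snoc u i
          have hcu : canon t β u = ρ u := (ihe).symm
          rcases fin2_cases (β u.length) with hb | hb
          · -- β turns left : must be case (a)
            have hcase : ρ (u ++ [0]) = QG.g2 ∧ ρ (u ++ [1]) = QG.top2 := by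
              rcases hdel with h | h
              · exact h
              · exfalso; rw [hb] at hnext; rcases hnext with h' | h' <;>
                  rw [h.1] at h' <;> exact QG.noConfusion h'
            rcases fin2_cases i with hi | hi <;> subst hi
            · refine ⟨?_, fun _ => ?_⟩
              · rw [hc, hcu, htu, hb]; rcases hgu with h | h <;> rw [h] <;>
                  simp [child0, hcase.1]
              · rw [List.length_append, List.length_singleton, ← hlen, ← hu]
                rw [pre_succ, ← hu, hb]
            · refine ⟨?_, fun hcontra => ?_⟩
              · rw [hc, hcu, htu, hb]; rcases hgu with h | h <;> rw [h] <;>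
                  simp [child0, hcase.2]
              · rw [hcase.2] at hcontra
                rcases hcontra with h' | h' <;> exact QG.noConfusion h'
          · -- β turns right : must be case (b)
            have hcase : ρ (u ++ [0]) = QG.l1 ∧ ρ (u ++ [1]) = QG.g1 := by
              rcases hdel with h | h
              · exfalso; rw [hb] at hnext; rcases hnext with h' | h' <;>
                  rw [h.2] at h' <;> exact QG.noConfusion h'
              · exact h
            rcases fin2_cases i with hi | hi <;> subst hi
            · refine ⟨?_, fun hcontra => ?_⟩
              · rw [hc, hcu, htu, hb]; rcases hgu with h | h <;> rw [h] <;>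
                  simp [child0, hcase.1]
              · rw [hcase.1] at hcontra
                rcases hcontra with h' | h' <;> exact QG.noConfusion h'
            · refine ⟨?_, fun _ => ?_⟩
              · rw [hc, hcu, htu, hb]; rcases hgu with h | h <;> rw [h] <;>
                  simp [child0, hcase.2]
              · rw [List.length_append, List.length_singleton, ← hlen, ← hu]
                rw [pre_succ, ← hu, hb]
        · -- u not a g-state : transitions deterministic and children not g
          push_neg at hgu
          have hc : canon t β (u ++ [i]) = child0 (t u) (β u.length) (canon t β u) i :=
            canon_snoc u i
          cases hqu : ρ u with
          | g1 => exact absurd hqu hgu.1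
          | g2 => exact absurd hqu hgu.2
          | _ =>
            rw [hqu] at hd
            cases htu : t u <;> rw [htu] at hd <;> simp only [deltaG] at hd <;>
              rcases fin2_cases i with hi | hi <;> subst hi <;>
              refine ⟨by rw [hc, ← ihe, hqu, htu]; simp [child0, hd.1, hd.2],
                fun hcontra => ?_⟩ <;>
              exfalso <;> first
                | (rw [hd.1] at hcontra; rcases hcontra with h|h <;> exact QG.noConfusion h)
                | (rw [hd.2] at hcontra; rcases hcontra with h|h <;> exact QG.noConfusion h)
  funext v
  exact (key v).1

end AGaux2
section AGaux3
variable {t : Tree2} {β γ : ℕ → Fin 2}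

lemma rank_le2 (q : QG) : rankG q ≤ 2 := by cases q <;> simp [rankG]

lemma canon_step (t : Tree2) (β γ : ℕ → Fin 2) (k : ℕ) :
    canon t β (pre γ (k+1)) =
      child0 (t (pre γ k)) (β k) (canon t β (pre γ k)) (γ k) := by
  rw [pre_succ, canon_snoc, pre_length]

lemma canon_beta_succ (ha : ∀ n, t (pre β n) = true) (n : ℕ) :
    canon t β (pre β (n+1)) = if β n = 0 then QG.g2 else QG.g1 := by
  rw [canon_step t β β n, ha n]
  rcases canon_g ha n (t := t) with h | h <;> rcases fin2_cases (β n) with hb | hb <;>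
    simp [child0, h, hb]

lemma canon_acc (hgood : Good t β) (hl : ∀ γ, Good t γ → ¬ LeftOf γ β) (γ : ℕ → Fin 2) :
    ParityOk (fun n => rankG (canon t β (pre γ n))) := by
  classical
  obtain ⟨ha, hz⟩ := hgood
  by_cases hall : ∀ n, γ n = β n
  · -- γ is β itself
    have hpre : ∀ n, pre γ n = pre β n := fun n => pre_congr (fun i _ => hall i)
    apply parity_of_two (fun k => rank_le2 _)
    intro m
    obtain ⟨n, hn, h0⟩ := hz m
    refine ⟨n + 1, by omega, ?_⟩
    show rankG (canon t β (pre γ (n + 1))) = 2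
    rw [hpre, canon_beta_succ ha, if_pos h0]
    rfl
  · push_neg at hall
    have hex : ∃ n, γ n ≠ β n := hall
    set n := Nat.find hex with hn
    have hne : γ n ≠ β n := Nat.find_spec hex
    have hlt : ∀ i < n, γ i = β i := fun i hi => by
      by_contra h; exact Nat.find_min hex hi h
    have hpre : ∀ m ≤ n, pre γ m = pre β m := fun m hm =>
      pre_congr (fun i hi => hlt i (lt_of_lt_of_le hi hm))
    have htn : t (pre γ n) = true := by rw [hpre n le_rfl]; exact ha n
    have hgn : canon t β (pre γ n) = QG.g1 ∨ canon t β (pre γ n) = QG.g2 := by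
      rw [hpre n le_rfl]; exact canon_g ha n
    rcases fin2_cases (β n) with hb | hb
    · -- β turns left, γ turns right : top2 forever
      have hγn : γ n = 1 := by
        rcases fin2_cases (γ n) with h | h
        · exact absurd (h.trans hb.symm) hne
        · exact h
      have hs1 : canon t β (pre γ (n+1)) = QG.top2 := by
        rw [canon_step t β γ n, htn, hγn]
        rcases hgn with h | h <;> simp [child0, h, hb]
      have htop : ∀ k, n+1 ≤ k → canon t β (pre γ k) = QG.top2 := by
        intro k hk
        induction k with
        | zero => omega
        | succ k ih =>
            rcases Nat.lt_or_ge (n+1) (k+1) with h | h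
            · have hk' : n+1 ≤ k := by omega
              rw [canon_step t β γ k, ih hk']
              cases t (pre γ k) <;> simp [child0]
            · have : n+1 = k+1 := by omega
              rw [← this]; exact hs1
      exact parity_of_eventually (m := n+1) (c := 2)
        (fun k hk => by rw [htop k hk]; rfl) (by decide)
    · -- β turns right, γ turns left : l-component
      have hγn : γ n = 0 := by
        rcases fin2_cases (γ n) with h | h
        · exact h
        · exact absurd (h.trans hb.symm) hne
      have hs1 : canon t β (pre γ (n+1)) = QG.l1 := by
        rw [canon_step t β γ n, htn, hγn]
        rcases hgn with h | h <;> simp [child0, h, hb]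
      by_cases htop : ∃ m, n+1 ≤ m ∧ canon t β (pre γ m) = QG.top0
      · obtain ⟨m, hm, hm0⟩ := htop
        have h0 : ∀ k, m ≤ k → canon t β (pre γ k) = QG.top0 := by
          intro k hk
          induction k with
          | zero => rw [Nat.le_zero.mp hk] at hm0; exact hm0
          | succ k ih =>
              rcases Nat.lt_or_ge m (k+1) with h | h
              · have hk' : m ≤ k := by omega
                rw [canon_step t β γ k, ih hk']
                cases t (pre γ k) <;> simp [child0]
              · have : m = k+1 := by omega
                rw [← this]; exact hm0
        exact parity_of_eventually (m := m) (c := 0)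
          (fun k hk => by rw [h0 k hk]; rfl) (by decide)
      · push_neg at htop
        have hls : ∀ k, n+1 ≤ k →
            canon t β (pre γ k) = QG.l1 ∨ canon t β (pre γ k) = QG.l0 := by
          intro k hk
          induction k with
          | zero => omega
          | succ k ih =>
              rcases Nat.lt_or_ge (n+1) (k+1) with h | h
              · have hk' : n+1 ≤ k := by omega
                have hnt := htop (k+1) (by omega)
                rw [canon_step t β γ k] at hnt ⊢
                rcases ih hk' with h' | h' <;> rw [h'] <;> rw [h'] at hnt <;>
                  cases ht' : t (pre γ k) <;> rw [ht'] at hnt <;>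
                  rcases fin2_cases (γ k) with hg' | hg' <;>
                    simp [child0, hg'] at hnt ⊢
              · have : n+1 = k+1 := by omega
                rw [← this]; left; exact hs1
        have hta : ∀ k, t (pre γ k) = true := by
          intro k
          rcases Nat.lt_or_ge k (n+1) with h | h
          · rw [hpre k (by omega)]; exact ha k
          · by_contra hf
            have hf' : t (pre γ k) = false := by
              cases h' : t (pre γ k)
              · rfl
              · exact absurd h' hf
            have := htop (k+1) (by omega)
            rw [canon_step t β γ k, hf'] at this
            rcases hls k h with h' | h' <;> rw [h'] at this <;>
              exact this (by simp [child0])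
        by_cases hinf : ∀ m, ∃ k ≥ m, γ k = 0
        · exact absurd ⟨n, hlt, hγn, hb⟩ (hl γ ⟨hta, hinf⟩)
        · push_neg at hinf
          obtain ⟨m, hm⟩ := hinf
          have hone : ∀ k, max m (n+1) ≤ k → γ k = 1 := fun k hk =>
            fin2_ne _ (hm k (le_trans (le_max_left _ _) hk))
          refine parity_of_eventually (m := max m (n+1) + 1) (c := 0) ?_ (by decide)
          intro k hk
          obtain ⟨j, rfl⟩ : ∃ j, k = j + 1 := ⟨k - 1, by omega⟩
          have hj : max m (n+1) ≤ j := by omega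
          rw [canon_step t β γ j, hta j, hone j hj]
          rcases hls j (le_trans (le_max_right _ _) hj) with h' | h' <;>
            rw [h'] <;> simp [child0, rankG]
end AGaux3
section AGaux4
variable {t : Tree2} {β γ : ℕ → Fin 2} {ρ : List (Fin 2) → QG}

lemma no_bot1 (hr : IsRunG t QG.g1 ρ)
    (hacc : ∀ β : ℕ → Fin 2, ParityOk (fun n => rankG (ρ (pre β n))))
    (v : List (Fin 2)) : ρ v ≠ QG.bot1 := by
  intro hv
  classical
  set δ : ℕ → Fin 2 := fun k => if h : k < v.length then v.get ⟨k, h⟩ else 0 with hδ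
  have hpre : pre δ v.length = v := by
    rw [pre]
    have : (fun i : Fin v.length => δ i) = fun i : Fin v.length => v.get i := by
      funext i; simp [hδ, i.isLt]
    rw [this, List.ofFn_get]
  have hb : ∀ k, v.length ≤ k → ρ (pre δ k) = QG.bot1 := by
    intro k hk
    induction k with
    | zero =>
        have h0 : v.length = 0 := by omega
        rw [← h0, hpre]; exact hv
    | succ k ih =>
        rcases Nat.lt_or_ge v.length (k+1) with h | h
        · have hk' : v.length ≤ k := by omega
          have hd := hr.2 (pre δ k)
          rw [ih hk'] at hd
          cases ht : t (pre δ k) <;> rw [ht] at hd <;>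
            [skip; skip] <;>
            · rw [pre_succ]
              rcases fin2_cases (δ k) with h' | h' <;> rw [h']
              · exact hd.1
              · exact hd.2
        · have : v.length = k+1 := by omega
          rw [← this, hpre]; exact hv
  have := not_parity_of_eventually_one (g := fun n => rankG (ρ (pre δ n)))
    (m := v.length) (fun k hk => by show rankG (ρ (pre δ k)) = 1; rw [hb k hk]; rfl)
  exact this (hacc δ)

def gdirstep (ρ : List (Fin 2) → QG) (v : List (Fin 2)) : Fin 2 :=
  if ρ (v ++ [1]) = QG.g1 then 1 else 0

def gpath (ρ : List (Fin 2) → QG) : ℕ → List (Fin 2)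
  | 0 => []
  | n+1 => gpath ρ n ++ [gdirstep ρ (gpath ρ n)]

def gdir (ρ : List (Fin 2) → QG) (n : ℕ) : Fin 2 := gdirstep ρ (gpath ρ n)

lemma pre_gdir (ρ : List (Fin 2) → QG) (n : ℕ) : pre (gdir ρ) n = gpath ρ n := by
  induction n with
  | zero => rfl
  | succ n ih => rw [pre_succ, ih]; rfl

lemma acc_forward (hacc : AccRunG t QG.g1 ρ) :
    ∃ β : ℕ → Fin 2, (∀ n, ρ (pre β n) = QG.g1 ∨ ρ (pre β n) = QG.g2) ∧
      Good t β ∧ ∀ γ, Good t γ → ¬ LeftOf γ β := by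
  obtain ⟨hr, hpar⟩ := hacc
  have hnb := no_bot1 hr hpar
  -- the invariant along the g-path
  have inv : ∀ n, (ρ (gpath ρ n) = QG.g1 ∨ ρ (gpath ρ n) = QG.g2) ∧
      t (gpath ρ n) = true := by
    intro n
    induction n with
    | zero =>
        refine ⟨Or.inl hr.1, ?_⟩
        by_contra hf
        have hf' : t ([] : List (Fin 2)) = false := by simpa [gpath] using hf
        have hd := hr.2 []
        rw [hr.1, hf'] at hd
        exact hnb ([] ++ [0]) hd.1
    | succ n ih =>
        obtain ⟨hgn, htn⟩ := ih
        have hd := hr.2 (gpath ρ n)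
        have hdel : (ρ (gpath ρ n ++ [0]) = QG.g2 ∧ ρ (gpath ρ n ++ [1]) = QG.top2) ∨
            (ρ (gpath ρ n ++ [0]) = QG.l1 ∧ ρ (gpath ρ n ++ [1]) = QG.g1) := by
          rcases hgn with h | h <;> rw [h, htn] at hd <;> exact hd
        have hstep : gpath ρ (n+1) = gpath ρ n ++ [gdirstep ρ (gpath ρ n)] := rfl
        have hgs : ρ (gpath ρ (n+1)) = QG.g1 ∨ ρ (gpath ρ (n+1)) = QG.g2 := by
          rcases hdel with h | h
          · right
            rw [hstep]
            have : gdirstep ρ (gpath ρ n) = 0 := by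
              rw [gdirstep, if_neg]; rw [h.2]; exact fun hc => QG.noConfusion hc
            rw [this]; exact h.1
          · left
            rw [hstep]
            have : gdirstep ρ (gpath ρ n) = 1 := by rw [gdirstep, if_pos h.2]
            rw [this]; exact h.2
        refine ⟨hgs, ?_⟩
        by_contra hf
        have hf' : t (gpath ρ (n+1)) = false := by simpa using hf
        have hd' := hr.2 (gpath ρ (n+1))
        rcases hgs with h | h <;> rw [h, hf'] at hd' <;>
          exact hnb (gpath ρ (n+1) ++ [0]) hd'.1
  refine ⟨gdir ρ, ?_, ⟨?_, ?_⟩, ?_⟩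
  · intro n; rw [pre_gdir]; exact (inv n).1
  · intro n; rw [pre_gdir]; exact (inv n).2
  · -- infinitely many left turns
    by_contra hf
    push_neg at hf
    obtain ⟨m, hm⟩ := hf
    have hone : ∀ k, m ≤ k → gdir ρ k = 1 := fun k hk => fin2_ne _ (hm k hk)
    have hg1 : ∀ k, m + 1 ≤ k → ρ (pre (gdir ρ) k) = QG.g1 := by
      intro k hk
      obtain ⟨j, rfl⟩ : ∃ j, k = j + 1 := ⟨k - 1, by omega⟩
      have hj : m ≤ j := by omega
      have h1 : gdirstep ρ (gpath ρ j) = 1 := hone j hj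
      have hcond : ρ (gpath ρ j ++ [1]) = QG.g1 := by
        by_contra hc
        rw [gdirstep, if_neg hc] at h1
        exact absurd h1 (by decide)
      rw [pre_succ, pre_gdir]
      have : gdir ρ j = 1 := hone j hj
      rw [this]
      exact hcond
    exact not_parity_of_eventually_one (m := m + 1)
      (fun k hk => by rw [hg1 k hk]; rfl) (hpar (gdir ρ))
  · -- no good branch to the left
    rintro γ ⟨hta, hinf⟩ ⟨n, hlt, hγn, hβn⟩
    have hcond : ρ (gpath ρ n ++ [1]) = QG.g1 := by
      have h1 : gdirstep ρ (gpath ρ n) = 1 := hβn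
      by_contra hc
      rw [gdirstep, if_neg hc] at h1
      exact absurd h1 (by decide)
    have hd := hr.2 (gpath ρ n)
    have htn : t (gpath ρ n) = true := (inv n).2
    have hl1 : ρ (gpath ρ n ++ [0]) = QG.l1 := by
      have hdel : (ρ (gpath ρ n ++ [0]) = QG.g2 ∧ ρ (gpath ρ n ++ [1]) = QG.top2) ∨
          (ρ (gpath ρ n ++ [0]) = QG.l1 ∧ ρ (gpath ρ n ++ [1]) = QG.g1) := by
        rcases (inv n).1 with h | h <;> rw [h, htn] at hd <;> exact hd
      rcases hdel with h' | h'
      · rw [h'.2] at hcond; exact absurd hcond (by decide)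
      · exact h'.1
    have hpren : pre γ n = gpath ρ n := by
      rw [← pre_gdir]; exact pre_congr hlt
    have hs1 : ρ (pre γ (n+1)) = QG.l1 := by
      rw [pre_succ, hpren, hγn]; exact hl1
    have hls : ∀ k, n+1 ≤ k → ρ (pre γ k) = QG.l1 ∨ ρ (pre γ k) = QG.l0 := by
      intro k hk
      induction k with
      | zero => omega
      | succ k ih =>
          rcases Nat.lt_or_ge (n+1) (k+1) with h | h
          · have hk' : n+1 ≤ k := by omega
            have hd' := hr.2 (pre γ k)
            rw [hta k] at hd'
            rw [pre_succ]
            rcases ih hk' with h' | h' <;> rw [h'] at hd' <;>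
              rcases fin2_cases (γ k) with hg' | hg' <;> rw [hg'] <;>
              first
                | exact Or.inl hd'.1
                | exact Or.inr hd'.2
          · have : n+1 = k+1 := by omega
            rw [← this]; exact Or.inl hs1
    have hcap : ∀ k, n+1 ≤ k → rankG (ρ (pre γ k)) ≤ 1 := by
      intro k hk
      rcases hls k hk with h | h <;> rw [h] <;> decide
    have hio : InfOften (fun k => rankG (ρ (pre γ k))) 1 := by
      intro m
      obtain ⟨k, hk, hk0⟩ := hinf (max m (n+1))
      refine ⟨k + 1, by omega, ?_⟩
      have hd' := hr.2 (pre γ k)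
      rw [hta k] at hd'
      have hkn : n+1 ≤ k := le_trans (le_max_right _ _) hk
      show rankG (ρ (pre γ (k+1))) = 1
      rw [pre_succ, hk0]
      rcases hls k hkn with h' | h' <;> rw [h'] at hd' <;> rw [hd'.1] <;> rfl
    exact not_parity_of_one_cap hio hcap (hpar γ)

end AGaux4
section AGaux5
variable {t : Tree2} {β γ : ℕ → Fin 2}

/-- the subtree rooted at `v` has a good branch (witnessed by `γ`) -/
def GoodAtW (t : Tree2) (v : List (Fin 2)) (γ : ℕ → Fin 2) : Prop :=
  (∀ n, t (v ++ pre γ n) = true) ∧ (∀ m, ∃ k ≥ m, γ k = 0)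

def GoodAt (t : Tree2) (v : List (Fin 2)) : Prop := ∃ γ, GoodAtW t v γ

lemma pre_succ_head (γ : ℕ → Fin 2) (n : ℕ) :
    pre γ (n+1) = γ 0 :: pre (fun k => γ (k+1)) n := by
  simp [pre, List.ofFn_succ]

lemma goodAtW_shift1 {v : List (Fin 2)} (h : GoodAtW t v γ) :
    GoodAtW t (v ++ [γ 0]) (fun k => γ (k+1)) := by
  obtain ⟨h1, h2⟩ := h
  constructor
  · intro n
    have := h1 (n+1)
    rw [pre_succ_head] at this
    simpa using this
  · intro m
    obtain ⟨k, hk, h0⟩ := h2 (m+1)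
    refine ⟨k - 1, by omega, ?_⟩
    show γ (k - 1 + 1) = 0
    have hkk : k - 1 + 1 = k := by omega
    rw [hkk]; exact h0

lemma goodAtW_shift {v : List (Fin 2)} (h : GoodAtW t v γ) (j : ℕ) :
    GoodAtW t (v ++ pre γ j) (fun k => γ (k + j)) := by
  induction j with
  | zero => simpa [pre_zero] using h
  | succ j ih =>
      have := goodAtW_shift1 ih
      have heq : (fun k => (fun k => γ (k + j)) (k+1)) = fun k => γ (k + (j+1)) := by
        funext k
        show γ (k + 1 + j) = γ (k + (j + 1))
        congr 1
        omega
      rw [heq] at this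
      have heq2 : (v ++ pre γ j) ++ [γ (0 + j)] = v ++ pre γ (j+1) := by
        rw [pre_succ, ← List.append_assoc]
        congr 2
        congr 1
        omega
      rwa [heq2] at this

open scoped Classical in
/-- the leftmost good path, greedily -/
noncomputable def lm (t : Tree2) : ℕ → List (Fin 2)
  | 0 => []
  | n+1 => lm t n ++ [if GoodAt t (lm t n ++ [0]) then 0 else 1]

open scoped Classical in
noncomputable def lmdir (t : Tree2) (n : ℕ) : Fin 2 :=
  if GoodAt t (lm t n ++ [0]) then 0 else 1

lemma pre_lmdir (t : Tree2) (n : ℕ) : pre (lmdir t) n = lm t n := by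
  classical
  induction n with
  | zero => rfl
  | succ n ih => rw [pre_succ, ih]; simp [lm, lmdir]

lemma leftmost (h : t ∈ G) :
    ∃ β : ℕ → Fin 2, Good t β ∧ ∀ γ, Good t γ → ¬ LeftOf γ β := by
  classical
  obtain ⟨γ0, hγ0⟩ := h
  have hroot : GoodAt t [] := ⟨γ0, fun n => by simpa using hγ0.1 n, hγ0.2⟩
  have inv : ∀ n, GoodAt t (lm t n) := by
    intro n
    induction n with
    | zero => exact hroot
    | succ n ih =>
        obtain ⟨γ, hγ⟩ := ih
        have hnext : GoodAt t (lm t n ++ [γ 0]) := ⟨_, goodAtW_shift1 hγ⟩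
        show GoodAt t (lm t n ++ [if GoodAt t (lm t n ++ [0]) then 0 else 1])
        by_cases hg : GoodAt t (lm t n ++ [0])
        · rw [if_pos hg]; exact hg
        · rw [if_neg hg]
          rcases fin2_cases (γ 0) with h0 | h0
          · rw [h0] at hnext; exact absurd hnext hg
          · rw [h0] at hnext; exact hnext
  have hlab : ∀ n, t (lm t n) = true := by
    intro n
    obtain ⟨γ, hγ⟩ := inv n
    have := hγ.1 0
    simpa [pre_zero] using this
  refine ⟨lmdir t, ⟨fun n => by rw [pre_lmdir]; exact hlab n, ?_⟩, ?_⟩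
  · -- infinitely many left turns
    intro m
    by_contra hf
    push_neg at hf
    have hone : ∀ k, m ≤ k → lmdir t k = 1 := fun k hk => fin2_ne _ (hf k hk)
    have hng : ∀ k, m ≤ k → ¬ GoodAt t (lm t k ++ [0]) := by
      intro k hk hg
      have := hone k hk
      rw [lmdir, if_pos hg] at this
      exact absurd this (by decide)
    obtain ⟨γ, hγ⟩ := inv m
    have hex0 : ∃ k, γ k = 0 := by obtain ⟨k, -, h0⟩ := hγ.2 0; exact ⟨k, h0⟩
    set K := Nat.find hex0 with hK
    have hK0 : γ K = 0 := Nat.find_spec hex0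
    have hKlt : ∀ i < K, γ i = 1 := fun i hi =>
      fin2_ne _ (Nat.find_min hex0 hi)
    have hlmj : ∀ j, j ≤ K → lm t (m + j) = lm t m ++ pre γ j := by
      intro j hj
      induction j with
      | zero => simp [pre_zero]
      | succ j ih =>
          have hj' : j ≤ K := by omega
          have hstep : lm t (m + j + 1) =
              lm t (m + j) ++ [if GoodAt t (lm t (m + j) ++ [0]) then 0 else 1] := rfl
          have hdir : lmdir t (m + j) = 1 := hone (m + j) (by omega)
          rw [lmdir] at hdir
          have hng' : ¬ GoodAt t (lm t (m + j) ++ [0]) := by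
            intro hg; rw [if_pos hg] at hdir; exact absurd hdir (by decide)
          have : m + (j + 1) = m + j + 1 := by omega
          rw [this, hstep, if_neg hng', ih hj', pre_succ, hKlt j (by omega),
            List.append_assoc]
    have hshift := goodAtW_shift hγ K
    have hnext := goodAtW_shift1 hshift
    have h0K : γ (0 + K) = 0 := by simpa using hK0
    rw [h0K] at hnext
    rw [← hlmj K le_rfl] at hnext
    exact hng (m + K) (by omega) ⟨_, hnext⟩
  · -- no good branch strictly to the left
    rintro δ ⟨hδa, hδz⟩ ⟨n, hlt, hδn, hβn⟩
    have hng : ¬ GoodAt t (lm t n ++ [0]) := by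
      intro hg
      have := hβn
      rw [lmdir, if_pos hg] at this
      exact absurd this (by decide)
    have hδw : GoodAtW t [] δ := ⟨fun k => by simpa using hδa k, hδz⟩
    have hshift := goodAtW_shift hδw (n+1)
    have hpren : pre δ (n+1) = lm t n ++ [0] := by
      rw [pre_succ, hδn]
      congr 1
      rw [← pre_lmdir]
      exact pre_congr hlt
    rw [hpren] at hshift
    exact hng ⟨_, by simpa using hshift⟩

end AGaux5
/-- A run of `A_G` on `t` is accepting iff the branch labelled with g-states is a good
branch with no good branch strictly to its left; consequently `t` is accepted iff
`t ∈ G`, and the accepting run, when it exists, is unique. -/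
theorem AG_run_characterization :
    (∀ (t : Tree2) (ρ : List (Fin 2) → QG), IsRunG t QG.g1 ρ →
      (AccRunG t QG.g1 ρ ↔
        ∃ β : ℕ → Fin 2,
          (∀ n, ρ (pre β n) = QG.g1 ∨ ρ (pre β n) = QG.g2) ∧
          Good t β ∧ ∀ γ, Good t γ → ¬ LeftOf γ β)) ∧
    (∀ t : Tree2, (∃ ρ, AccRunG t QG.g1 ρ) ↔ t ∈ G) ∧
    (∀ (t : Tree2) ρ₁ ρ₂, AccRunG t QG.g1 ρ₁ → AccRunG t QG.g1 ρ₂ → ρ₁ = ρ₂) := by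
  have part1 : ∀ (t : Tree2) (ρ : List (Fin 2) → QG), IsRunG t QG.g1 ρ →
      (AccRunG t QG.g1 ρ ↔
        ∃ β : ℕ → Fin 2,
          (∀ n, ρ (pre β n) = QG.g1 ∨ ρ (pre β n) = QG.g2) ∧
          Good t β ∧ ∀ γ, Good t γ → ¬ LeftOf γ β) := by
    intro t ρ hr
    constructor
    · exact acc_forward
    · rintro ⟨β, hg, hgood, hl⟩
      have heq : ρ = canon t β := run_eq_canon hr hg hgood.1
      exact ⟨hr, fun γ => by rw [heq]; exact canon_acc hgood hl γ⟩
  refine ⟨part1, ?_, ?_⟩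
  · intro t
    constructor
    · rintro ⟨ρ, hacc⟩
      obtain ⟨β, -, hgood, -⟩ := acc_forward hacc
      exact ⟨β, hgood⟩
    · intro ht
      obtain ⟨β, hgood, hl⟩ := leftmost ht
      exact ⟨canon t β, (part1 t _ (canon_run t β)).mpr
        ⟨β, canon_g hgood.1, hgood, hl⟩⟩
  · intro t ρ₁ ρ₂ h1 h2
    obtain ⟨β₁, hg1, hgood1, hl1⟩ := acc_forward h1
    obtain ⟨β₂, hg2, hgood2, hl2⟩ := acc_forward h2
    have hβ : β₁ = β₂ := by
      classical
      funext n
      by_contra hne0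
      have hex : ∃ n, β₁ n ≠ β₂ n := ⟨n, hne0⟩
      set N := Nat.find hex with hN
      have hne : β₁ N ≠ β₂ N := Nat.find_spec hex
      have hlt : ∀ i < N, β₁ i = β₂ i := fun i hi => by
        by_contra h; exact Nat.find_min hex hi h
      rcases fin2_cases (β₁ N) with h0 | h0
      · have h1' : β₂ N = 1 := fin2_ne _ (fun h => hne (h0.trans h.symm))
        exact hl2 β₁ hgood1 ⟨N, hlt, h0, h1'⟩
      · have h0' : β₂ N = 0 := by
          rcases fin2_cases (β₂ N) with h | h
          · exact h
          · exact absurd (h0.trans h.symm) hne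
        exact hl1 β₂ hgood2 ⟨N, fun i hi => (hlt i hi).symm, h0', h0⟩
    rw [run_eq_canon h1.1 hg1 hgood1.1, run_eq_canon h2.1 hg2 hgood2.1, hβ]
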